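/- There is a constant c > 0 such that for every real number x' with x' ≥ 1 one has ∫_{1/b}^∞ V'(r) / ( V'(r)² + (U'(r) - x')² ) dr ≥ c · (x')^{-1 + 1/γ}. -/

import Mathlib

open Complex MeasureTheory

section Stmt6Aux
open Real


lemma cpow_re_eq (z : ℂ) (hz : z ≠ 0) (γ : ℝ) :
    (z ^ (γ:ℂ)).re = ‖z‖ ^ γ * Real.cos (γ * Complex.arg z) := by
  rw [Complex.cpow_def_of_ne_zero hz, Complex.exp_re]
  have h1 : (Complex.log z * γ).re = γ * Real.log ‖z‖ := by
    simp [Complex.log_re, Complex.mul_re]; ring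
  have h2 : (Complex.log z * γ).im = γ * Complex.arg z := by
    simp [Complex.log_im, Complex.mul_im]; ring
  rw [h1, h2, Real.rpow_def_of_pos (norm_pos_iff.mpr hz), mul_comm (Real.log _)]

lemma cpow_im_eq (z : ℂ) (hz : z ≠ 0) (γ : ℝ) :
    (z ^ (γ:ℂ)).im = ‖z‖ ^ γ * Real.sin (γ * Complex.arg z) := by
  rw [Complex.cpow_def_of_ne_zero hz, Complex.exp_im]
  have h1 : (Complex.log z * γ).re = γ * Real.log ‖z‖ := by
    simp [Complex.log_re, Complex.mul_re]; ring
  have h2 : (Complex.log z * γ).im = γ * Complex.arg z := by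
    simp [Complex.log_im, Complex.mul_im]; ring
  rw [h1, h2, Real.rpow_def_of_pos (norm_pos_iff.mpr hz), mul_comm (Real.log _)]

lemma arg_add_I (x : ℝ) : Complex.arg ((x:ℂ) + Complex.I) = π/2 - Real.arctan x := by
  have h1 : Real.cos (π/2 - Real.arctan x) = x / Real.sqrt (1 + x^2) := by
    rw [Real.cos_pi_div_two_sub, Real.sin_arctan]
  have h2 : Real.sin (π/2 - Real.arctan x) = 1 / Real.sqrt (1 + x^2) := by
    rw [Real.sin_pi_div_two_sub, Real.cos_arctan]
  have hρ : (0:ℝ) < Real.sqrt (1 + x^2) := Real.sqrt_pos.2 (by positivity)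
  have key : (x:ℂ) + Complex.I = (Real.sqrt (1 + x^2) : ℝ) *
      (Real.cos (π/2 - Real.arctan x) + Real.sin (π/2 - Real.arctan x) * Complex.I) := by
    rw [h1, h2]
    push_cast
    rw [mul_add, ← mul_assoc]
    rw [mul_div_cancel₀ _ (by exact_mod_cast hρ.ne' : (Real.sqrt (1+x^2):ℂ) ≠ 0),
      mul_div_cancel₀ _ (by exact_mod_cast hρ.ne' : (Real.sqrt (1+x^2):ℂ) ≠ 0)]
    ring
  rw [key, Complex.arg_real_mul _ hρ, Complex.ofReal_cos, Complex.ofReal_sin,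
    Complex.arg_cos_add_sin_mul_I]
  constructor
  · have := Real.arctan_lt_pi_div_two x; linarith [Real.pi_pos]
  · have := Real.neg_pi_div_two_lt_arctan x; linarith

lemma abs_add_I (x : ℝ) : ‖(x:ℂ) + Complex.I‖ = Real.sqrt (x^2 + 1) := by
  rw [Complex.norm_def, Complex.normSq_apply]
  simp [Complex.add_re, Complex.add_im]
  ring_nf

lemma add_I_ne (x : ℝ) : ((x:ℂ) + Complex.I) ≠ 0 := by
  intro h
  have := congrArg Complex.im h
  simp at this

lemma g_bounds (γ : ℝ) (hγ : 1 < γ) {x : ℝ} (hx1 : 1 ≤ x)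
    (hθ : γ * (π/2 - Real.arctan x) ≤ π/4) :
    x ^ γ / 2 ≤ (((x:ℂ) + Complex.I) ^ (γ:ℂ)).re ∧
    (((x:ℂ) + Complex.I) ^ (γ:ℂ)).re ≤ 2^γ * x^γ ∧
    γ/4 * x^(γ-1) ≤ (((x:ℂ) + Complex.I) ^ (γ:ℂ)).im ∧
    (((x:ℂ) + Complex.I) ^ (γ:ℂ)).im ≤ γ * 2^γ * x^(γ-1) := by
  have hx0 : (0:ℝ) < x := by linarith
  have hγ0 : (0:ℝ) < γ := by linarith
  set θ := π/2 - Real.arctan x with hθdef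
  clear_value θ
  have hθpos : 0 < θ := by
    have := Real.arctan_lt_pi_div_two x; simp only [hθdef]; linarith
  have hγθpos : 0 < γ * θ := by positivity
  set ρ := Real.sqrt (x^2 + 1) with hρdef
  clear_value ρ
  have hρpos : 0 < ρ := by rw [hρdef]; exact Real.sqrt_pos.2 (by positivity)
  have hρl : x ≤ ρ := by
    rw [hρdef]
    nlinarith [Real.sq_sqrt (by positivity : (0:ℝ) ≤ x^2+1), Real.sqrt_nonneg (x^2+1)]
  have hρu : ρ ≤ 2 * x := by
    rw [hρdef]
    nlinarith [Real.sq_sqrt (by positivity : (0:ℝ) ≤ x^2+1), Real.sqrt_nonneg (x^2+1)]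
  -- rpow bounds on ρ^γ
  have hP1 : x ^ γ ≤ ρ ^ γ := Real.rpow_le_rpow hx0.le hρl hγ0.le
  have hP2 : ρ ^ γ ≤ 2^γ * x^γ := by
    calc ρ ^ γ ≤ (2*x) ^ γ := Real.rpow_le_rpow hρpos.le hρu hγ0.le
    _ = 2^γ * x^γ := Real.mul_rpow (by norm_num) hx0.le
  have hP1' : x ^ (γ-1) ≤ ρ ^ (γ-1) := Real.rpow_le_rpow hx0.le hρl (by linarith)
  have hP2' : ρ ^ (γ-1) ≤ 2^(γ-1) * x^(γ-1) := by
    calc ρ ^ (γ-1) ≤ (2*x) ^ (γ-1) := Real.rpow_le_rpow hρpos.le hρu (by linarith)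
    _ = 2^(γ-1) * x^(γ-1) := Real.mul_rpow (by norm_num) hx0.le
  -- θ bounds
  have hθinv : θ = Real.arctan x⁻¹ := by rw [hθdef]; exact (Real.arctan_inv_of_pos hx0).symm
  have hθu : θ ≤ x⁻¹ := by
    rw [hθinv]
    have h1 : 0 < Real.arctan x⁻¹ := by
      rw [← Real.arctan_zero]
      exact Real.arctan_strictMono (by positivity)
    have h2 := Real.arctan_lt_pi_div_two x⁻¹
    have h3 := Real.lt_tan h1 h2
    rw [Real.tan_arctan] at h3
    exact h3.le
  have hsinθ : Real.sin θ = 1 / ρ := by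
    rw [hθdef, Real.sin_pi_div_two_sub, Real.cos_arctan, hρdef, add_comm (x^2) 1]

  have hθl : 1/(2*x) ≤ θ := by
    have h1 : Real.sin θ ≤ θ := Real.sin_le hθpos.le
    have h2 : 1/(2*x) ≤ 1/ρ := by
      apply one_div_le_one_div_of_le hρpos hρu
    rw [hsinθ] at h1; linarith
  -- sin(γθ) bounds
  have hsl : γ/(4*x) ≤ Real.sin (γ * θ) := by
    have := Real.mul_le_sin hγθpos.le (by linarith [Real.pi_pos] : γ*θ ≤ π/2)
    have h2 : γ/(4*x) ≤ 2/π * (γ*θ) := by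
      have hπ : π ≤ 4 := by linarith [Real.pi_le_four]
      have : γ * (1/(2*x)) ≤ γ * θ := by
        apply mul_le_mul_of_nonneg_left hθl hγ0.le
      calc γ/(4*x) = (1/2) * (γ * (1/(2*x))) := by ring
      _ ≤ (1/2) * (γ * θ) := by linarith
      _ ≤ 2/π * (γ*θ) := by
        apply mul_le_mul_of_nonneg_right _ hγθpos.le
        rw [div_le_div_iff₀ (by norm_num) Real.pi_pos]
        linarith
    linarith
  have hsu : Real.sin (γ * θ) ≤ γ * x⁻¹ := by
    have h1 : Real.sin (γ*θ) ≤ γ*θ := Real.sin_le hγθpos.le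
    have h2 : γ * θ ≤ γ * x⁻¹ := mul_le_mul_of_nonneg_left hθu hγ0.le
    exact h1.trans h2
  -- cos(γθ) bounds
  have hcu : Real.cos (γ * θ) ≤ 1 := Real.cos_le_one _
  have hcl : 1/2 ≤ Real.cos (γ * θ) := by
    have h1 : Real.cos (π/4) ≤ Real.cos (γ*θ) := by
      apply Real.cos_le_cos_of_nonneg_of_le_pi hγθpos.le (by linarith [Real.pi_pos]) hθ
    rw [Real.cos_pi_div_four] at h1
    have : (1:ℝ) ≤ Real.sqrt 2 := by
      rw [show (1:ℝ) = Real.sqrt 1 by simp]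
      exact Real.sqrt_le_sqrt (by norm_num)
    linarith
  -- assemble
  have hre : (((x:ℂ) + Complex.I) ^ (γ:ℂ)).re = ρ ^ γ * Real.cos (γ * θ) := by
    rw [cpow_re_eq _ (add_I_ne x) γ, abs_add_I, arg_add_I, ← hρdef, ← hθdef]
  have him : (((x:ℂ) + Complex.I) ^ (γ:ℂ)).im = ρ ^ γ * Real.sin (γ * θ) := by
    rw [cpow_im_eq _ (add_I_ne x) γ, abs_add_I, arg_add_I, ← hρdef, ← hθdef]
  have hρpow : 0 < ρ ^ γ := Real.rpow_pos_of_pos hρpos γ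
  have hxpow : 0 < x ^ γ := Real.rpow_pos_of_pos hx0 γ
  have hxsub : x ^ γ * x⁻¹ = x ^ (γ - 1) := by
    rw [Real.rpow_sub hx0, Real.rpow_one, div_eq_mul_inv]
  refine ⟨?_, ?_, ?_, ?_⟩
  · rw [hre]
    calc x ^ γ / 2 = x^γ * (1/2) := by ring
    _ ≤ ρ^γ * Real.cos (γ*θ) := by
      apply mul_le_mul hP1 hcl (by norm_num) hρpow.le
  · rw [hre]
    calc ρ^γ * Real.cos (γ*θ) ≤ ρ^γ * 1 := by
          apply mul_le_mul_of_nonneg_left hcu hρpow.le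
    _ = ρ^γ := mul_one _
    _ ≤ 2^γ * x^γ := hP2
  · rw [him]
    calc γ/4 * x^(γ-1) = x^γ * (γ/(4*x)) := by
          rw [← hxsub]; field_simp
    _ ≤ ρ^γ * Real.sin (γ*θ) := by
      apply mul_le_mul hP1 hsl (by positivity) hρpow.le
  · rw [him]
    calc ρ^γ * Real.sin (γ*θ) ≤ (2^γ * x^γ) * (γ * x⁻¹) := by
          apply mul_le_mul hP2 hsu (Real.sin_nonneg_of_nonneg_of_le_pi hγθpos.le
            (by linarith [Real.pi_pos])) (by positivity)
    _ = γ * 2^γ * x^(γ-1) := by rw [← hxsub]; ring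

lemma im_ne (z₀ : ℂ) (h : z₀.im = 1) (r : ℝ) : (z₀ + (r:ℂ)) ∈ Complex.slitPlane := by
  refine Or.inr ?_
  simp [Complex.add_im, h]

lemma cont_aux (z₀ : ℂ) (h : z₀.im = 1) (γ : ℝ) :
    Continuous fun r : ℝ => (z₀ + (r:ℂ)) ^ (γ:ℂ) := by
  rw [continuous_iff_continuousAt]
  intro r
  have : ContinuousAt (fun z : ℂ => z ^ (γ:ℂ)) (z₀ + (r:ℂ)) := continuousAt_cpow_const (im_ne z₀ h r)
  have h2 : ContinuousAt (fun k : ℝ => z₀ + (k:ℂ)) r := by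
    exact Continuous.continuousAt (by continuity)
  exact ContinuousAt.comp (f := fun k : ℝ => z₀ + (k:ℂ)) (x := r) this h2

lemma deriv_aux (z₀ : ℂ) (h : z₀.im = 1) (γ : ℝ) (r : ℝ) :
    HasDerivAt (fun r : ℝ => (z₀ + (r:ℂ)) ^ (γ:ℂ))
      ((γ:ℂ) * (z₀ + (r:ℂ)) ^ ((γ:ℂ) - 1)) r := by
  have hE : HasDerivAt (fun z : ℂ => (z₀ + z) ^ (γ:ℂ))
      ((γ:ℂ) * (z₀ + (r:ℂ)) ^ ((γ:ℂ) - 1)) (r:ℂ) := by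
    simpa using ((hasDerivAt_id (r:ℂ)).const_add z₀).cpow_const (im_ne z₀ h r)
  exact hE.comp_ofReal



lemma g_deriv_norm (γ : ℝ) (hγ : 1 < γ) {x : ℝ} (hx1 : 1 ≤ x) :
    ‖(γ:ℂ) * ((x:ℂ) + Complex.I) ^ ((γ:ℂ) - 1)‖ ≤ γ * 2^γ * x^(γ-1) := by
  have hx0 : (0:ℝ) < x := by linarith
  have hγ0 : (0:ℝ) < γ := by linarith
  have habs : ‖((x:ℂ) + Complex.I) ^ ((γ:ℂ) - 1)‖
      = Real.sqrt (x^2+1) ^ (γ - 1) := by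
    rw [Complex.norm_cpow_of_ne_zero (add_I_ne x), abs_add_I]
    norm_num
  rw [norm_mul, habs, Complex.norm_real, Real.norm_eq_abs,
    abs_of_pos hγ0]
  have hρu : Real.sqrt (x^2+1) ≤ 2 * x := by
    nlinarith [Real.sq_sqrt (by positivity : (0:ℝ) ≤ x^2+1), Real.sqrt_nonneg (x^2+1)]
  have h2 : Real.sqrt (x^2+1) ^ (γ-1) ≤ 2^(γ-1) * x^(γ-1) := by
    calc Real.sqrt (x^2+1) ^ (γ-1) ≤ (2*x) ^ (γ-1) :=
        Real.rpow_le_rpow (Real.sqrt_nonneg _) hρu (by linarith)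
    _ = 2^(γ-1) * x^(γ-1) := Real.mul_rpow (by norm_num) hx0.le
  have h3 : (2:ℝ)^(γ-1) ≤ 2^γ := Real.rpow_le_rpow_of_exponent_le (by norm_num) (by linarith)
  have hxp : (0:ℝ) ≤ x^(γ-1) := (Real.rpow_pos_of_pos hx0 _).le
  calc γ * Real.sqrt (x^2+1) ^ (γ-1) ≤ γ * (2^(γ-1) * x^(γ-1)) :=
      mul_le_mul_of_nonneg_left h2 hγ0.le
  _ ≤ γ * (2^γ * x^(γ-1)) := by
      apply mul_le_mul_of_nonneg_left _ hγ0.le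
      exact mul_le_mul_of_nonneg_right h3 hxp
  _ = γ * 2^γ * x^(γ-1) := by ring

lemma x1_angle (γ : ℝ) (hγ : 1 < γ) {x : ℝ}
    (hx : Real.tan (π/2 - π/(4*γ)) ≤ x) :
    γ * (π/2 - Real.arctan x) ≤ π/4 := by
  have hγ0 : (0:ℝ) < γ := by linarith
  have hπ := Real.pi_pos
  have ht1 : π/(4*γ) < π/4 := by
    rw [div_lt_div_iff₀ (by positivity) (by norm_num)]
    nlinarith
  have ht0 : 0 < π/(4*γ) := by positivity
  have hmem : π/2 - π/(4*γ) ∈ Set.Ioo (-(π/2)) (π/2) := by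
    constructor <;> [linarith; linarith]
  have harct : Real.arctan (Real.tan (π/2 - π/(4*γ))) = π/2 - π/(4*γ) :=
    Real.arctan_tan hmem.1 hmem.2
  have hmono : Real.arctan (Real.tan (π/2 - π/(4*γ))) ≤ Real.arctan x :=
    Real.arctan_strictMono.monotone hx
  rw [harct] at hmono
  have : π/2 - Real.arctan x ≤ π/(4*γ) := by linarith
  calc γ * (π/2 - Real.arctan x) ≤ γ * (π/(4*γ)) :=
      mul_le_mul_of_nonneg_left this hγ0.le
  _ = π/4 := by field_simp

end Stmt6Aux

open Real in
set_option maxHeartbeats 2000000 in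
/-- There is `c > 0` such that for every real `x' ≥ 1`,
`∫_{1/b}^∞ V'(r) / (V'(r)² + (U'(r) - x')²) dr ≥ c (x')^{-1 + 1/γ}`. -/
theorem stmt_6 (a b : ℝ) (hb : 0 < b)
    (ζs : ℂ) (hζs : ζs = -(a : ℂ) / (b : ℂ) + Complex.I)
    (γ : ℝ) (hγ : γ = Real.pi / Complex.arg ζs)
    (U' V' : ℝ → ℝ)
    (hU : ∀ r : ℝ, U' r = ((ζs + (r : ℂ)) ^ (γ : ℂ)).re)
    (hV : ∀ r : ℝ, V' r = ((ζs + (r : ℂ)) ^ (γ : ℂ)).im) :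
    ∃ c : ℝ, 0 < c ∧ ∀ x' : ℝ, 1 ≤ x' →
      (∫ r in Set.Ioi (1 / b), V' r / (V' r ^ 2 + (U' r - x') ^ 2))
        ≥ c * x' ^ (-1 + 1 / γ) := by
  have hπ := Real.pi_pos
  set d : ℝ := a / b with hd
  clear_value d
  have hb' : (0:ℝ) < 1 / b := by positivity
  have hζ : ∀ r : ℝ, ζs + (r:ℂ) = (((r - d : ℝ)):ℂ) + Complex.I := by
    intro r; rw [hζs, hd]; push_cast; ring
  have hζ0 : ζs = (((-d : ℝ)):ℂ) + Complex.I := by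
    have := hζ 0; simpa using this
  have harg : Complex.arg ζs = π/2 - Real.arctan (-d) := by rw [hζ0, arg_add_I]
  have hθ₀pos : 0 < Complex.arg ζs := by
    rw [harg]; have := Real.arctan_lt_pi_div_two (-d); linarith
  have hθ₀lt : Complex.arg ζs < π := by
    rw [harg]; have := Real.neg_pi_div_two_lt_arctan (-d); linarith
  have hγ1 : 1 < γ := by
    rw [hγ, lt_div_iff₀ hθ₀pos, one_mul]; exact hθ₀lt
  have hγ0 : (0:ℝ) < γ := by linarith
  have hγπ : γ * Complex.arg ζs = π := by rw [hγ]; field_simp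
  have hU' : ∀ r : ℝ, U' r = ((((r - d : ℝ):ℂ) + Complex.I) ^ (γ:ℂ)).re := by
    intro r; rw [hU r, hζ r]
  have hV' : ∀ r : ℝ, V' r = ((((r - d : ℝ):ℂ) + Complex.I) ^ (γ:ℂ)).im := by
    intro r; rw [hV r, hζ r]
  -- positivity of V' for r > 0
  have hVpos : ∀ r : ℝ, 0 < r → 0 < V' r := by
    intro r hr
    rw [hV' r, cpow_im_eq _ (add_I_ne _) γ, arg_add_I]
    apply mul_pos (Real.rpow_pos_of_pos (norm_pos_iff.mpr (add_I_ne _)) γ)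
    apply Real.sin_pos_of_pos_of_lt_pi
    · have h := Real.arctan_lt_pi_div_two (r - d)
      apply mul_pos hγ0; linarith
    · have hmono : Real.arctan (-d) < Real.arctan (r - d) :=
        Real.arctan_strictMono (by linarith)
      have : γ * (π/2 - Real.arctan (r - d)) < γ * (π/2 - Real.arctan (-d)) := by
        apply mul_lt_mul_of_pos_left (by linarith) hγ0
      rw [harg] at hγπ
      linarith
  -- continuity
  have him : ζs.im = 1 := by rw [hζ0]; simp
  have hcont : Continuous (fun r : ℝ => (ζs + (r:ℂ)) ^ (γ:ℂ)) := cont_aux ζs him γ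
  have hUc : Continuous U' := by
    have h : U' = fun r : ℝ => ((ζs + (r:ℂ)) ^ (γ:ℂ)).re := funext hU
    rw [h]; exact Complex.continuous_re.comp hcont
  have hVc : Continuous V' := by
    have h : V' = fun r : ℝ => ((ζs + (r:ℂ)) ^ (γ:ℂ)).im := funext hV
    rw [h]; exact Complex.continuous_im.comp hcont
  -- constants
  set x₁ : ℝ := max 1 (Real.tan (π/2 - π/(4*γ))) with hx₁def
  clear_value x₁
  have hx₁1 : (1:ℝ) ≤ x₁ := by rw [hx₁def]; exact le_max_left _ _
  set r₁ : ℝ := max (1/b) (d + x₁) + 1 with hr₁def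
  clear_value r₁
  have hr₁b : 1/b < r₁ := by
    rw [hr₁def]; exact lt_of_le_of_lt (le_max_left _ _) (lt_add_one _)
  have hr₁pos : 0 < r₁ := lt_trans hb' hr₁b
  have hr₁d : x₁ + 1 ≤ r₁ - d := by
    have : d + x₁ ≤ max (1/b) (d + x₁) := le_max_right _ _
    rw [hr₁def]; linarith
  -- bundled bounds for r ≥ r₁
  have hB : ∀ r : ℝ, r₁ ≤ r →
      (r-d)^γ/2 ≤ U' r ∧ U' r ≤ 2^γ*(r-d)^γ ∧
      γ/4*(r-d)^(γ-1) ≤ V' r ∧ V' r ≤ γ*2^γ*(r-d)^(γ-1) := by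
    intro r hr
    have hge : x₁ + 1 ≤ r - d := by linarith [hr₁d]
    have h1 : 1 ≤ r - d := by linarith [hx₁1]
    have h2 : Real.tan (π/2 - π/(4*γ)) ≤ r - d := by
      have := le_max_right 1 (Real.tan (π/2 - π/(4*γ)))
      rw [← hx₁def] at this; linarith
    rw [hU' r, hV' r]
    exact g_bounds γ hγ1 h1 (x1_angle γ hγ1 h2)
  have h1led : ∀ r : ℝ, r₁ ≤ r → 1 ≤ r - d := by
    intro r hr; have := hr₁d; linarith [hx₁1]
  -- derivative facts
  have hder : ∀ r : ℝ, HasDerivAt (fun t : ℝ => (ζs + (t:ℂ)) ^ (γ:ℂ))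
      ((γ:ℂ) * (ζs + (r:ℂ)) ^ ((γ:ℂ) - 1)) r := deriv_aux ζs him γ
  have hdnorm : ∀ r : ℝ, r₁ ≤ r →
      ‖(γ:ℂ) * (ζs + (r:ℂ)) ^ ((γ:ℂ) - 1)‖ ≤ γ * 2^γ * (r-d)^(γ-1) := by
    intro r hr
    rw [hζ r]
    exact g_deriv_norm γ hγ1 (h1led r hr)
  -- final constants
  set X₀ : ℝ := max (U' r₁ + 1) 1 with hX₀def
  clear_value X₀
  set xM : ℝ := r₁ + 1 - d with hxMdef
  clear_value xM
  have hxMpos : 0 < xM := by have := h1led r₁ le_rfl; rw [hxMdef]; linarith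
  set Mv : ℝ := γ*2^γ*xM^(γ-1) with hMvdef
  clear_value Mv
  set Mu : ℝ := 2^γ*xM^γ with hMudef
  clear_value Mu
  have hMvpos : 0 < Mv := by
    rw [hMvdef]; have := Real.rpow_pos_of_pos hxMpos (γ-1)
    have h2 : (0:ℝ) < (2:ℝ)^γ := Real.rpow_pos_of_pos (by norm_num) γ
    positivity
  have hMupos : 0 < Mu := by
    rw [hMudef]; have := Real.rpow_pos_of_pos hxMpos γ
    have h2 : (0:ℝ) < (2:ℝ)^γ := Real.rpow_pos_of_pos (by norm_num) γ
    positivity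
  have hX₀1 : (1:ℝ) ≤ X₀ := by rw [hX₀def]; exact le_max_right _ _
  set c₀ : ℝ := (γ/4) / (Mv^2 + (Mu + X₀)^2) with hc₀def
  clear_value c₀
  have hc₀pos : 0 < c₀ := by
    rw [hc₀def]; apply div_pos (by positivity); positivity
  set C₂ : ℝ := γ*2^γ*3^(γ-1) with hC₂def
  clear_value C₂
  have hC₂pos : 0 < C₂ := by
    rw [hC₂def]
    have h2 : (0:ℝ) < (2:ℝ)^γ := Real.rpow_pos_of_pos (by norm_num) γ
    have h3 : (0:ℝ) < (3:ℝ)^(γ-1) := Real.rpow_pos_of_pos (by norm_num) (γ-1)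
    positivity
  set c₁ : ℝ := γ/4 * ((2:ℝ)^(γ-1))⁻¹ with hc₁def
  clear_value c₁
  have hc₁pos : 0 < c₁ := by
    rw [hc₁def]
    have h2 : (0:ℝ) < (2:ℝ)^(γ-1) := Real.rpow_pos_of_pos (by norm_num) (γ-1)
    positivity
  set c₂ : ℝ := c₁ / (2*C₂^2) with hc₂def
  clear_value c₂
  have hc₂pos : 0 < c₂ := by rw [hc₂def]; positivity
  refine ⟨min c₀ c₂, lt_min hc₀pos hc₂pos, ?_⟩
  intro x' hx'
  have hexp : -1 + 1/γ ≤ 0 := by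
    have : 1/γ ≤ 1 := by rw [div_le_one hγ0]; linarith
    linarith
  set f : ℝ → ℝ := fun r => V' r / (V' r ^ 2 + (U' r - x') ^ 2) with hfdef
  clear_value f
  -- nonnegativity of f on Ioi (1/b)
  have hfnn : ∀ r : ℝ, 1/b ≤ r → 0 ≤ f r := by
    intro r hr
    simp only [hfdef]
    apply div_nonneg (hVpos r (lt_of_lt_of_le hb' hr)).le (by positivity)
  -- measurability
  have hfm : Measurable f := by
    rw [hfdef]
    apply Measurable.div hVc.measurable
    exact ((hVc.measurable.pow_const 2).add
      ((hUc.measurable.sub measurable_const).pow_const 2))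
  -- integrability
  set R₂ : ℝ := max r₁ (max (2*|d|+1) (d + (4*x')^(γ⁻¹))) with hR₂def
  clear_value R₂
  have hR₂r₁ : r₁ ≤ R₂ := by rw [hR₂def]; exact le_max_left _ _
  have hR₂d : 2*|d|+1 ≤ R₂ := by
    rw [hR₂def]; exact le_trans (le_max_left _ _) (le_max_right _ _)
  have hR₂x : d + (4*x')^(γ⁻¹) ≤ R₂ := by
    rw [hR₂def]; exact le_trans (le_max_right _ _) (le_max_right _ _)
  have hR₂pos : 0 < R₂ := lt_of_lt_of_le (by positivity : (0:ℝ) < 2*|d|+1) hR₂d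
  have hIoi : IntegrableOn f (Set.Ioi R₂) := by
    have hbase : IntegrableOn (fun r : ℝ => r ^ (-γ-1)) (Set.Ioi R₂) :=
      integrableOn_Ioi_rpow_of_lt (by linarith) hR₂pos
    apply Integrable.mono' (hbase.const_mul (16*γ*2^γ*2^(γ+1)))
      (hfm.aestronglyMeasurable.restrict)
    rw [ae_restrict_iff' measurableSet_Ioi]
    apply Filter.Eventually.of_forall
    intro r hr
    simp only [hfdef]
    replace hr : R₂ < r := hr
    have hrr₁ : r₁ ≤ r := le_trans hR₂r₁ hr.le
    have hr0 : 0 < r := lt_trans hR₂pos hr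
    have hy1 : 1 ≤ r - d := h1led r hrr₁
    have hy0 : (0:ℝ) < r - d := by linarith
    obtain ⟨hU1, hU2, hV1, hV2⟩ := hB r hrr₁
    have hx4 : (4*x')^(γ⁻¹) ≤ r - d := by
      have := hR₂x; linarith
    have h4x : 4*x' ≤ (r-d)^γ := by
      have h := Real.rpow_le_rpow (Real.rpow_nonneg (by linarith) _) hx4 hγ0.le
      rwa [Real.rpow_inv_rpow (by linarith) hγ0.ne'] at h
    have hU2x : 2*x' ≤ U' r := by linarith
    have hUx : (r-d)^γ/4 ≤ U' r - x' := by linarith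
    have hUxpos : 0 < U' r - x' := lt_of_lt_of_le (div_pos (Real.rpow_pos_of_pos hy0 γ) (by norm_num)) hUx
    have hfle : V' r / (V' r ^ 2 + (U' r - x') ^ 2) ≤ 16*γ*2^γ * (r-d)^(-γ-1) := by
      have h1 : V' r / (V' r ^ 2 + (U' r - x') ^ 2) ≤ V' r / (U' r - x')^2 := by
        apply div_le_div_of_nonneg_left (hVpos r hr0).le (pow_pos hUxpos 2)
        linarith [sq_nonneg (V' r)]
      have h2 : V' r / (U' r - x')^2 ≤ (γ*2^γ*(r-d)^(γ-1)) / (((r-d)^γ/4)^2) := by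
        apply div_le_div₀ (by positivity) hV2 (by positivity)
        apply pow_le_pow_left₀ (by positivity) hUx
      have h3 : (γ*2^γ*(r-d)^(γ-1)) / (((r-d)^γ/4)^2) = 16*γ*2^γ * (r-d)^(-γ-1) := by
        have e1 : ((r-d)^γ/4)^2 = (r-d)^(γ+γ)/16 := by
          rw [Real.rpow_add hy0]; ring
        have e2 : (r-d)^(γ-1) = (r-d)^(-γ-1) * (r-d)^(γ+γ) := by
          rw [← Real.rpow_add hy0]
          congr 1
          ring
        have hpos : (0:ℝ) < (r-d)^(γ+γ) := Real.rpow_pos_of_pos hy0 _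
        rw [e1, e2]
        field_simp
      rw [h3] at h2
      linarith
    have hC4 : (r-d)^(-γ-1) ≤ 2^(γ+1) * r^(-γ-1) := by
      have hrd : r/2 ≤ r - d := by
        have habs : |d| ≤ r/2 := by linarith [hR₂d, hr, abs_nonneg d]
        linarith [le_abs_self d]
      have h1 : (r-d)^(-γ-1) ≤ (r/2)^(-γ-1) :=
        Real.rpow_le_rpow_of_nonpos (by positivity) hrd (by linarith)
      have h2 : (r/2:ℝ)^(-γ-1) = 2^(γ+1) * r^(-γ-1) := by
        rw [show -γ-1 = -(γ+1) by ring, Real.div_rpow hr0.le (by norm_num : (0:ℝ) ≤ 2),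
          Real.rpow_neg (by norm_num : (0:ℝ) ≤ 2), div_eq_mul_inv, inv_inv, mul_comm]
      linarith
    have hfr0 : 0 ≤ V' r / (V' r ^ 2 + (U' r - x') ^ 2) :=
      div_nonneg (hVpos r hr0).le (by positivity)
    rw [_root_.Real.norm_eq_abs, _root_.abs_of_nonneg hfr0]
    calc V' r / (V' r ^ 2 + (U' r - x') ^ 2) ≤ 16*γ*2^γ * (r-d)^(-γ-1) := hfle
    _ ≤ 16*γ*2^γ * (2^(γ+1) * r^(-γ-1)) := by
        apply mul_le_mul_of_nonneg_left hC4 (by positivity)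
    _ = 16*γ*2^γ*2^(γ+1) * r^(-γ-1) := by ring
  have hIoc : IntegrableOn f (Set.Ioc (1/b) R₂) := by
    have hfc : ContinuousOn f (Set.Icc (1/b) R₂) := by
      rw [hfdef]
      apply ContinuousOn.div hVc.continuousOn
      · exact ((hVc.pow 2).add ((hUc.sub continuous_const).pow 2)).continuousOn
      · intro r hr
        have hV0 : 0 < V' r := hVpos r (lt_of_lt_of_le hb' hr.1)
        exact ne_of_gt (add_pos_of_pos_of_nonneg (pow_pos hV0 2) (sq_nonneg _))
    exact (hfc.integrableOn_Icc).mono_set Set.Ioc_subset_Icc_self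
  have hint : IntegrableOn f (Set.Ioi (1/b)) := by
    rw [← Set.Ioc_union_Ioi_eq_Ioi (le_trans hr₁b.le hR₂r₁)]
    exact hIoc.union hIoi
  have hae : 0 ≤ᵐ[volume.restrict (Set.Ioi (1/b))] f := by
    filter_upwards [ae_restrict_mem measurableSet_Ioi] with r hr
    simpa using hfnn r (le_of_lt hr)
  -- master step
  have master : ∀ p : ℝ, r₁ ≤ p → ∀ m : ℝ, (∀ r ∈ Set.Icc p (p+1), m ≤ f r) →
      m ≤ ∫ r in Set.Ioi (1/b), f r := by
    intro p hp m hm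
    have hsub : Set.Icc p (p+1) ⊆ Set.Ioi (1/b) := by
      intro r hr
      exact lt_of_lt_of_le (lt_of_lt_of_le hr₁b hp) hr.1
    have h1 : ∫ r in Set.Icc p (p+1), f r ≤ ∫ r in Set.Ioi (1/b), f r := by
      apply setIntegral_mono_set hint hae (HasSubset.Subset.eventuallyLE hsub)
    have hvol : (volume (Set.Icc p (p+1))).toReal = 1 := by
      rw [Real.volume_Icc]; norm_num
    have h2 : m * (volume (Set.Icc p (p+1))).toReal ≤ ∫ r in Set.Icc p (p+1), f r := by
      apply setIntegral_ge_of_const_le_real measurableSet_Icc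
      · rw [Real.volume_Icc]; exact ENNReal.ofReal_ne_top
      · exact hm
      · exact hint.mono_set hsub
    rw [hvol, mul_one] at h2
    linarith
  rcases le_or_gt x' X₀ with hcase | hcase
  · -- small regime
    have hm : ∀ r ∈ Set.Icc r₁ (r₁+1), c₀ ≤ f r := by
      intro r hr
      simp only [hfdef]
      have hrr₁ : r₁ ≤ r := hr.1
      obtain ⟨hU1, hU2, hV1, hV2⟩ := hB r hrr₁
      have hy1 : 1 ≤ r - d := h1led r hrr₁
      have hyM : r - d ≤ xM := by rw [hxMdef]; linarith [hr.2]
      have hV'ge : γ/4 ≤ V' r := by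
        have h := Real.one_le_rpow hy1 (by linarith : (0:ℝ) ≤ γ-1)
        have h2 := mul_le_mul_of_nonneg_left h (by positivity : (0:ℝ) ≤ γ/4)
        rw [mul_one] at h2
        linarith
      have hV'le : V' r ≤ Mv := by
        rw [hMvdef]
        have h : (r-d)^(γ-1) ≤ xM^(γ-1) := Real.rpow_le_rpow (by linarith) hyM (by linarith)
        have h2pos : (0:ℝ) < (2:ℝ)^γ := Real.rpow_pos_of_pos (by norm_num) γ
        have h2 := mul_le_mul_of_nonneg_left h (by positivity : (0:ℝ) ≤ γ*2^γ)
        calc V' r ≤ γ*2^γ*(r-d)^(γ-1) := hV2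
        _ ≤ γ*2^γ*xM^(γ-1) := by linarith
      have hU'0 : 0 ≤ U' r := le_trans (by positivity) hU1
      have hU'le : U' r ≤ Mu := by
        rw [hMudef]
        have h : (r-d)^γ ≤ xM^γ := Real.rpow_le_rpow (by linarith) hyM hγ0.le
        have h2pos : (0:ℝ) < (2:ℝ)^γ := Real.rpow_pos_of_pos (by norm_num) γ
        have h2 := mul_le_mul_of_nonneg_left h h2pos.le
        calc U' r ≤ 2^γ*(r-d)^γ := hU2
        _ ≤ 2^γ*xM^γ := by linarith
      have hsq : (U' r - x')^2 ≤ (Mu + X₀)^2 := by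
        apply sq_le_sq'
        · linarith
        · linarith
      have hVr0 : 0 < V' r := hVpos r (lt_of_lt_of_le hr₁pos hrr₁)
      have hdenpos : 0 < V' r ^ 2 + (U' r - x')^2 :=
        add_pos_of_pos_of_nonneg (pow_pos hVr0 2) (sq_nonneg _)
      rw [hc₀def]
      apply div_le_div₀ hVr0.le hV'ge hdenpos
      have : V' r ^ 2 ≤ Mv ^ 2 := pow_le_pow_left₀ hVr0.le hV'le 2
      linarith
    have hint' := master r₁ le_rfl c₀ hm
    have hrp : x' ^ (-1+1/γ) ≤ 1 := Real.rpow_le_one_of_one_le_of_nonpos hx' hexp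
    have hrpnn : 0 ≤ x' ^ (-1+1/γ) := Real.rpow_nonneg (by linarith) _
    calc min c₀ c₂ * x' ^ (-1+1/γ) ≤ c₀ * 1 := by
          apply mul_le_mul (min_le_left _ _) hrp hrpnn hc₀pos.le
    _ = c₀ := mul_one _
    _ ≤ _ := hint'
  · -- large regime
    have hU'r₁ : U' r₁ + 1 ≤ x' := by
      have : U' r₁ + 1 ≤ X₀ := by rw [hX₀def]; exact le_max_left _ _
      linarith
    set A : ℝ := x' ^ (γ⁻¹) with hAdef
    clear_value A
    have hx'0 : (0:ℝ) < x' := by linarith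
    have hA1 : (1:ℝ) ≤ A := by rw [hAdef]; exact Real.one_le_rpow hx' (by positivity)
    have hA0 : (0:ℝ) < A := by linarith
    set R : ℝ := r₁ + (2*x')^(γ⁻¹) with hRdef
    clear_value R
    have hRr₁ : r₁ ≤ R := by
      rw [hRdef]; have : (0:ℝ) ≤ (2*x')^(γ⁻¹) := Real.rpow_nonneg (by linarith) _
      linarith
    have hU'R : x' ≤ U' R := by
      obtain ⟨hU1, _, _, _⟩ := hB R hRr₁
      have hRd : (2*x')^(γ⁻¹) ≤ R - d := by
        rw [hRdef]; have := hr₁d; linarith [hx₁1]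
      have h2x : 2*x' ≤ (R-d)^γ := by
        have h := Real.rpow_le_rpow (Real.rpow_nonneg (by linarith) _) hRd hγ0.le
        rwa [Real.rpow_inv_rpow (by linarith) hγ0.ne'] at h
      linarith
    obtain ⟨rs, hrsIcc, hrs⟩ := intermediate_value_Icc hRr₁ hUc.continuousOn
      (Set.mem_Icc.mpr ⟨by linarith, hU'R⟩)
    have hrs1 : r₁ ≤ rs := hrsIcc.1
    obtain ⟨hUs1, hUs2, _, _⟩ := hB rs hrs1
    have hys1 : 1 ≤ rs - d := h1led rs hrs1
    -- rs - d bounds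
    have hxu : rs - d ≤ 2*A := by
      have h2x : (rs-d)^γ ≤ 2*x' := by rw [hrs] at hUs1; linarith
      have h := Real.rpow_le_rpow (Real.rpow_nonneg (by linarith) γ) h2x (by positivity : (0:ℝ) ≤ γ⁻¹)
      rw [Real.rpow_rpow_inv (by linarith) hγ0.ne'] at h
      calc rs - d ≤ (2*x')^(γ⁻¹) := h
      _ = 2^(γ⁻¹) * A := by rw [Real.mul_rpow (by norm_num) hx'0.le, hAdef]
      _ ≤ 2*A := by
          have hbd : (2:ℝ)^(γ⁻¹) ≤ 2 := by
            have hle : γ⁻¹ ≤ (1:ℝ) := by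
              rw [inv_le_one_iff₀]; right; linarith
            have := Real.rpow_le_rpow_of_exponent_le (by norm_num : (1:ℝ) ≤ 2) hle
            rwa [Real.rpow_one] at this
          exact mul_le_mul_of_nonneg_right hbd hA0.le
    have hxl : A/2 ≤ rs - d := by
      have h2x : x'/(2^γ) ≤ (rs-d)^γ := by
        rw [hrs] at hUs2
        rw [div_le_iff₀ (Real.rpow_pos_of_pos (by norm_num) γ)]
        linarith [hUs2]
      have h := Real.rpow_le_rpow (by positivity) h2x (by positivity : (0:ℝ) ≤ γ⁻¹)
      rw [Real.rpow_rpow_inv (by linarith) hγ0.ne'] at h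
      rw [Real.div_rpow hx'0.le (Real.rpow_pos_of_pos (by norm_num) γ).le,
        Real.rpow_rpow_inv (by norm_num) hγ0.ne'] at h
      rw [← hAdef] at h
      exact h
    set T : ℝ := A^(γ-1) with hTdef
    clear_value T
    have hTpos : 0 < T := by rw [hTdef]; exact Real.rpow_pos_of_pos hA0 _
    have hT1 : T = x' ^ (1 - γ⁻¹) := by
      rw [hTdef, hAdef, ← Real.rpow_mul hx'0.le]
      congr 1
      field_simp
    have hTinv : T⁻¹ = x' ^ (-1+1/γ) := by
      rw [hT1, show (-1+1/γ : ℝ) = -(1-γ⁻¹) by rw [one_div]; ring,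
        Real.rpow_neg hx'0.le]
    -- bounds on J
    have hJsub : ∀ r ∈ Set.Icc rs (rs+1), 1 ≤ r - d ∧ A/2 ≤ r - d ∧ r - d ≤ 3*A := by
      intro r hr
      refine ⟨by linarith [hr.1, hys1], by linarith [hr.1, hxl], ?_⟩
      have := hr.2
      linarith [hxu, hA1]
    have hVub : ∀ r ∈ Set.Icc rs (rs+1), V' r ≤ C₂ * T := by
      intro r hr
      obtain ⟨h1, h2, h3⟩ := hJsub r hr
      obtain ⟨_, _, _, hV2⟩ := hB r (by linarith [hr.1])
      have hch : (r-d)^(γ-1) ≤ 3^(γ-1) * T := by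
        calc (r-d)^(γ-1) ≤ (3*A)^(γ-1) := Real.rpow_le_rpow (by linarith) h3 (by linarith)
        _ = 3^(γ-1) * T := by rw [Real.mul_rpow (by norm_num) hA0.le, hTdef]
      rw [hC₂def]
      calc V' r ≤ γ*2^γ*(r-d)^(γ-1) := hV2
      _ ≤ γ*2^γ*(3^(γ-1)*T) := by
          apply mul_le_mul_of_nonneg_left hch
          positivity
      _ = γ*2^γ*3^(γ-1) * T := by ring
    have hVlb : ∀ r ∈ Set.Icc rs (rs+1), c₁ * T ≤ V' r := by
      intro r hr
      obtain ⟨h1, h2, h3⟩ := hJsub r hr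
      obtain ⟨_, _, hV1, _⟩ := hB r (by linarith [hr.1])
      have hch : ((2:ℝ)^(γ-1))⁻¹ * T ≤ (r-d)^(γ-1) := by
        have : (A/2)^(γ-1) ≤ (r-d)^(γ-1) := Real.rpow_le_rpow (by positivity) h2 (by linarith)
        rw [Real.div_rpow hA0.le (by norm_num : (0:ℝ) ≤ 2)] at this
        rw [← hTdef] at this
        rw [mul_comm, ← div_eq_mul_inv]
        exact this
      rw [hc₁def]
      calc γ/4 * ((2:ℝ)^(γ-1))⁻¹ * T = γ/4 * (((2:ℝ)^(γ-1))⁻¹ * T) := by ring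
      _ ≤ γ/4 * (r-d)^(γ-1) := by
          apply mul_le_mul_of_nonneg_left hch (by positivity)
      _ ≤ V' r := hV1
    -- mean value estimate for U'
    have hMVT : ∀ r ∈ Set.Icc rs (rs+1), |U' r - x'| ≤ C₂ * T := by
      have hDb : ∀ t ∈ Set.Ico rs (rs+1),
          ‖(γ:ℂ) * (ζs + (t:ℂ)) ^ ((γ:ℂ) - 1)‖ ≤ C₂ * T := by
        intro t ht
        have ht1 : r₁ ≤ t := by linarith [ht.1]
        calc ‖(γ:ℂ) * (ζs + (t:ℂ)) ^ ((γ:ℂ) - 1)‖ ≤ γ * 2^γ * (t-d)^(γ-1) := hdnorm t ht1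
        _ ≤ C₂ * T := by
            have h3 : t - d ≤ 3*A := by
              have := ht.2; linarith [hxu, hA1]
            have hch : (t-d)^(γ-1) ≤ 3^(γ-1) * T := by
              calc (t-d)^(γ-1) ≤ (3*A)^(γ-1) :=
                  Real.rpow_le_rpow (by linarith [h1led t ht1]) h3 (by linarith)
              _ = 3^(γ-1) * T := by rw [Real.mul_rpow (by norm_num) hA0.le, hTdef]
            rw [hC₂def]
            calc γ*2^γ*(t-d)^(γ-1) ≤ γ*2^γ*(3^(γ-1)*T) := by
                  apply mul_le_mul_of_nonneg_left hch; positivity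
            _ = γ*2^γ*3^(γ-1) * T := by ring
      have hMV := norm_image_sub_le_of_norm_deriv_le_segment'
        (f := fun t : ℝ => (ζs + (t:ℂ)) ^ (γ:ℂ))
        (f' := fun t : ℝ => (γ:ℂ) * (ζs + (t:ℂ)) ^ ((γ:ℂ) - 1))
        (fun t _ => (hder t).hasDerivWithinAt) hDb
      intro r hr
      have h1 := hMV r hr
      have h2 : |U' r - x'| ≤ ‖(ζs + (r:ℂ)) ^ (γ:ℂ) - (ζs + (rs:ℂ)) ^ (γ:ℂ)‖ := by
        rw [hU r, ← hrs, hU rs]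
        calc |((ζs + (r:ℂ)) ^ (γ:ℂ)).re - ((ζs + (rs:ℂ)) ^ (γ:ℂ)).re|
            = |((ζs + (r:ℂ)) ^ (γ:ℂ) - (ζs + (rs:ℂ)) ^ (γ:ℂ)).re| := by rw [Complex.sub_re]
        _ ≤ ‖(ζs + (r:ℂ)) ^ (γ:ℂ) - (ζs + (rs:ℂ)) ^ (γ:ℂ)‖ :=
            Complex.abs_re_le_norm _
      have h3 : C₂ * T * (r - rs) ≤ C₂ * T * 1 := by
        apply mul_le_mul_of_nonneg_left (by linarith [hr.2]) (by positivity)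
      rw [mul_one] at h3
      linarith [h1, h2, h3]
    -- integrand lower bound on J
    have hm : ∀ r ∈ Set.Icc rs (rs+1), c₂ * x' ^ (-1+1/γ) ≤ f r := by
      intro r hr
      simp only [hfdef]
      have hVr0 : 0 < V' r := hVpos r (by linarith [hr.1, lt_of_lt_of_le hr₁b hrs1, hr₁pos])
      have h1 := hVlb r hr
      have h2 := hVub r hr
      have h3 := hMVT r hr
      have hsq : (U' r - x')^2 ≤ (C₂*T)^2 := by
        have := abs_le.mp h3
        apply sq_le_sq'
        · linarith [this.1]
        · exact this.2
      have hden : V' r ^2 + (U' r - x')^2 ≤ (C₂*T)^2 + (C₂*T)^2 := by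
        have : V' r ^2 ≤ (C₂*T)^2 := pow_le_pow_left₀ hVr0.le h2 2
        linarith
      have hstep : (c₁*T)/((C₂*T)^2 + (C₂*T)^2) ≤ V' r / (V' r ^ 2 + (U' r - x') ^ 2) := by
        apply div_le_div₀ hVr0.le h1
          (add_pos_of_pos_of_nonneg (pow_pos hVr0 2) (sq_nonneg _)) hden
      have heq : (c₁*T)/((C₂*T)^2 + (C₂*T)^2) = c₂ * x' ^ (-1+1/γ) := by
        rw [← hTinv, hc₂def]
        field_simp
        ring
      rw [← heq]
      exact hstep
    have hint' := master rs hrs1 _ hm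
    calc min c₀ c₂ * x' ^ (-1+1/γ) ≤ c₂ * x' ^ (-1+1/γ) := by
          apply mul_le_mul_of_nonneg_right (min_le_right _ _)
            (Real.rpow_nonneg (by linarith) _)
    _ ≤ _ := hint'
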